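/- Let X = [0,1] be endowed with the snowflake metric d(x,y) = √|x−y| and let Ω be any nonempty proper open subset of X. Then for every continuous function ℓ : Ω → ℝ with ℓ(x) > 0 for all x ∈ Ω, there is no continuous function u : cl(Ω) → ℝ such that s[u](x) = ℓ(x) for all x ∈ Ω (slope taken in the metric space ([0,1],d)) and u(x) = 0 for all x ∈ ∂Ω. In particular, no slope eikonal equation with zero boundary data admits a continuous pointwise solution in this space. -/

import Mathlib

open Filter Topology Set MeasureTheory
open scoped ENNReal NNReal

/-- The local (descent) slope of `u` at `x`, relative to the ambient set `A`. -/
noncomputable def locSlopeOn {X : Type*} [PseudoMetricSpace X] (u : X → ℝ) (A : Set X) (x : X) :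
    ℝ≥0∞ :=
  Filter.limsup (fun y => ENNReal.ofReal (max (u x - u y) 0 / dist x y)) (𝓝[A \ {x}] x)

/-- The local (descent) slope of `u` at `x`. -/
noncomputable def locSlope {X : Type*} [PseudoMetricSpace X] (u : X → ℝ) (x : X) : ℝ≥0∞ :=
  locSlopeOn u Set.univ x

/-- The intrinsic (length) distance between two points. -/
noncomputable def intrinsicDist {X : Type*} [PseudoMetricSpace X] (x y : X) : ℝ≥0∞ :=
  ⨅ (T : ℝ) (_ : 0 ≤ T) (γ : ℝ → X) (_ : ContinuousOn γ (Set.Icc 0 T))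
    (_ : γ 0 = x) (_ : γ T = y), eVariationOn γ (Set.Icc 0 T)

/-- Compatibility condition (CC). -/
def SatisfiesCC {X : Type*} [PseudoMetricSpace X] (Ω : Set X) (ℓ g : X → ℝ) : Prop :=
  ∀ x ∈ frontier Ω, ∀ y ∈ frontier Ω, ∀ T > (0:ℝ), ∀ γ : ℝ → X,
    LipschitzOnWith 1 γ (Set.Icc 0 T) → Set.MapsTo γ (Set.Icc 0 T) (closure Ω) →
    γ 0 = y → γ T = x → Set.MapsTo γ (Set.Ioo 0 T) Ω →
    g x - g y ≤ ∫ t in (0:ℝ)..T, ℓ (γ t)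

/-- Continuous pointwise solution of the slope eikonal equation. -/
def IsEikonalSol {X : Type*} [PseudoMetricSpace X] (Ω : Set X) (ℓ g u : X → ℝ) : Prop :=
  ContinuousOn u (closure Ω) ∧
  (∀ x ∈ Ω, locSlopeOn u (closure Ω) x = ENNReal.ofReal (ℓ x)) ∧
  ∀ x ∈ frontier Ω, u x = g x

/-- Eikonal space. -/
def IsEikonalSpace (X : Type*) [MetricSpace X] : Prop :=
  ∀ Ω : Set X, IsOpen Ω → Ω.Nonempty → Ω ≠ Set.univ →
    ∀ ℓ g : X → ℝ, ContinuousOn ℓ Ω → (∃ M, ∀ x ∈ Ω, |ℓ x| ≤ M) →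
      (∃ c > 0, ∀ x ∈ Ω, c ≤ ℓ x) → ContinuousOn g (frontier Ω) →
      SatisfiesCC Ω ℓ g → ∃ u : X → ℝ, IsEikonalSol Ω ℓ g u

/-- The `E_{1,0}` property. -/
def HasE10 (X : Type*) [MetricSpace X] : Prop :=
  ∀ K : Set X, IsClosed K → K.Nonempty →
    ∃ u : X → ℝ, Continuous u ∧ (∀ x ∉ K, locSlope u x = 1) ∧ ∀ x ∈ K, u x = 0

/-- The unit interval, to be endowed with the snowflake metric `d(x,y) = √|x-y|`. -/
structure Snow : Type where
  val : ℝ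
  mem : val ∈ Set.Icc (0:ℝ) 1

private theorem sqrt_subadd {a b : ℝ} (ha : 0 ≤ a) (hb : 0 ≤ b) :
    Real.sqrt (a + b) ≤ Real.sqrt a + Real.sqrt b := by
  have sa := Real.sq_sqrt ha
  have sb := Real.sq_sqrt hb
  have na := Real.sqrt_nonneg a
  have nb := Real.sqrt_nonneg b
  have h2 : a + b ≤ (Real.sqrt a + Real.sqrt b) ^ 2 := by nlinarith
  calc Real.sqrt (a + b) ≤ Real.sqrt ((Real.sqrt a + Real.sqrt b) ^ 2) :=
        Real.sqrt_le_sqrt h2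
    _ = Real.sqrt a + Real.sqrt b := Real.sqrt_sq (by positivity)

/-- The snowflake metric `d(x,y) = √|x - y|` on `[0,1]`. -/
noncomputable instance : MetricSpace Snow where
  dist x y := Real.sqrt |x.val - y.val|
  dist_self x := by simp
  dist_comm x y := by rw [abs_sub_comm]
  dist_triangle x y z := by
    calc Real.sqrt |x.val - z.val| ≤ Real.sqrt (|x.val - y.val| + |y.val - z.val|) :=
          Real.sqrt_le_sqrt (abs_sub_le _ _ _)
      _ ≤ Real.sqrt |x.val - y.val| + Real.sqrt |y.val - z.val| :=
          sqrt_subadd (abs_nonneg _) (abs_nonneg _)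
  eq_of_dist_eq_zero := by
    intro x y h
    have h0 : |x.val - y.val| = 0 := by
      have := Real.sqrt_eq_zero (abs_nonneg _) |>.mp h
      exact this
    cases x; cases y
    simp only [abs_eq_zero, sub_eq_zero] at h0
    simpa using h0


/-! ### Auxiliary material for `stmt5` -/

private lemma snow_dist (x y : Snow) : dist x y = Real.sqrt |x.val - y.val| := rfl

private lemma snow_ext {x y : Snow} (h : x.val = y.val) : x = y := by
  cases x; cases y; simpa using h

/-- Embedding of `ℝ` into `Snow` via clamping. -/
noncomputable def eSnow (t : ℝ) : Snow :=
  ⟨min 1 (max 0 t), ⟨le_min zero_le_one (le_max_left _ _), min_le_left _ _⟩⟩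

private lemma eSnow_val_of_mem {t : ℝ} (ht : t ∈ Icc (0:ℝ) 1) : (eSnow t).val = t := by
  simp only [eSnow]
  rw [max_eq_right ht.1, min_eq_right ht.2]

private lemma min1_lip (a b : ℝ) : |min 1 a - min 1 b| ≤ |a - b| := by
  have h1 := le_abs_self (a - b)
  have h2 := neg_abs_le (a - b)
  rcases le_total a 1 with ha|ha <;> rcases le_total b 1 with hb|hb <;>
    rw [abs_le] <;> constructor <;>
    simp [min_eq_right, min_eq_left, ha, hb] <;> linarith

private lemma clamp_lip (s t : ℝ) :
    |min 1 (max 0 s) - min 1 (max 0 t)| ≤ |s - t| := by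
  have h1 : |max 0 s - max 0 t| ≤ |s - t| := by
    simpa [max_comm] using abs_max_sub_max_le_abs s t 0
  exact le_trans (min1_lip _ _) h1

private lemma eSnow_continuous : Continuous eSnow := by
  rw [Metric.continuous_iff]
  intro t ε hε
  refine ⟨ε ^ 2, by positivity, fun s hs => ?_⟩
  rw [snow_dist]
  rw [Real.dist_eq] at hs
  have h1 : |(eSnow s).val - (eSnow t).val| ≤ |s - t| := clamp_lip s t
  calc Real.sqrt |(eSnow s).val - (eSnow t).val| ≤ Real.sqrt |s - t| :=
        Real.sqrt_le_sqrt h1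
    _ < ε := (Real.sqrt_lt' hε).mpr hs

private lemma mono_pt {r t : ℝ} (hrt : r < t) {h : ℝ → ℝ} (hm : MonotoneOn h (Icc r t)) :
    ∃ x ∈ Ioo r t, ∃ C : ℝ, 0 ≤ C ∧ ∀ᶠ y in 𝓝 x, |h x - h y| ≤ C * |x - y| := by
  set g : ℝ → ℝ := fun s => h (max r (min s t)) with hg
  have hclamp : ∀ s, max r (min s t) ∈ Icc r t := fun s =>
    ⟨le_max_left _ _, max_le hrt.le (min_le_right _ _)⟩
  have hgmono : Monotone g := by
    intro a b hab
    exact hm (hclamp a) (hclamp b) (max_le_max le_rfl (min_le_min hab le_rfl))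
  have hae := hgmono.ae_differentiableAt
  have hexist : ∃ x ∈ Ioo r t, DifferentiableAt ℝ g x := by
    by_contra hc
    push_neg at hc
    have hsub : Ioo r t ⊆ {x | ¬ DifferentiableAt ℝ g x} := fun x hx => hc x hx
    have h0 : volume (Ioo r t) = 0 :=
      measure_mono_null hsub (MeasureTheory.ae_iff.mp hae)
    rw [Real.volume_Ioo] at h0
    have := ENNReal.ofReal_eq_zero.mp h0
    linarith
  obtain ⟨x, hx, hdiff⟩ := hexist
  obtain ⟨c, hc⟩ := hdiff.isBigO_sub.bound
  refine ⟨x, hx, max c 0, le_max_right _ _, ?_⟩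
  have hopen : ∀ᶠ y in 𝓝 x, y ∈ Ioo r t := isOpen_Ioo.eventually_mem hx
  filter_upwards [hc, hopen] with y hy hy2
  have hyeq : g y = h y := by
    simp only [hg]
    rw [min_eq_left hy2.2.le, max_eq_right hy2.1.le]
  have hxeq : g x = h x := by
    simp only [hg]
    rw [min_eq_left hx.2.le, max_eq_right hx.1.le]
  have hb : |h y - h x| ≤ c * |y - x| := by
    simpa [hyeq, hxeq, Real.norm_eq_abs] using hy
  calc |h x - h y| = |h y - h x| := abs_sub_comm _ _
    _ ≤ c * |y - x| := hb
    _ ≤ max c 0 * |x - y| := by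
        rw [abs_sub_comm y x]
        exact mul_le_mul_of_nonneg_right (le_max_left _ _) (abs_nonneg _)

private lemma core_dichotomy {p q : ℝ} (hpq : p < q) {f : ℝ → ℝ}
    (hf : ContinuousOn f (Icc p q)) :
    ∃ x ∈ Ioo p q, ∃ C : ℝ, 0 ≤ C ∧ ∀ᶠ y in 𝓝 x, max (f x - f y) 0 ≤ C * |x - y| := by
  by_cases hmin : ∃ x ∈ Ioo p q, ∃ δ > (0:ℝ), ∀ y ∈ Icc p q, |y - x| < δ → f x ≤ f y
  · obtain ⟨x, hx, δ, hδ, hloc⟩ := hmin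
    refine ⟨x, hx, 0, le_rfl, ?_⟩
    have h1 : ∀ᶠ y in 𝓝 x, y ∈ Ioo p q := isOpen_Ioo.eventually_mem hx
    have h2 : ∀ᶠ y in 𝓝 x, |y - x| < δ := by
      have := Metric.ball_mem_nhds x hδ
      filter_upwards [this] with y hy
      simpa [Real.dist_eq] using hy
    filter_upwards [h1, h2] with y hy1 hy2
    have := hloc y (Ioo_subset_Icc_self hy1) hy2
    simp [max_le_iff, sub_nonpos.mpr this]
  · push_neg at hmin
    have quasi : ∀ r t, p ≤ r → r < t → t ≤ q → ∀ x ∈ Ioo r t, min (f r) (f t) < f x := by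
      intro r t hpr hrt htq x hx
      have hsub : Icc r t ⊆ Icc p q := Icc_subset_Icc hpr htq
      have key : ∀ w ∈ Ioo r t, ¬ IsMinOn f (Icc r t) w := by
        intro w hw hwmin
        have hwIoo : w ∈ Ioo p q := ⟨lt_of_le_of_lt hpr hw.1, lt_of_lt_of_le hw.2 htq⟩
        have hδ : (0:ℝ) < min (w - r) (t - w) := by
          simp only [lt_min_iff]; constructor <;> [linarith [hw.1]; linarith [hw.2]]
        obtain ⟨y, hy, hyd, hyf⟩ := hmin w hwIoo (min (w - r) (t - w)) hδ
        have habs := abs_lt.mp hyd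
        have hyrt : y ∈ Icc r t := by
          constructor
          · have : -(w - r) < y - w := lt_of_le_of_lt (neg_le_neg (min_le_left _ _)) habs.1
            linarith
          · have : y - w < t - w := lt_of_lt_of_le habs.2 (min_le_right _ _)
            linarith
        exact absurd (hwmin hyrt) (not_le.mpr hyf)
      obtain ⟨z, hz, hzmin⟩ := isCompact_Icc.exists_isMinOn (nonempty_Icc.mpr hrt.le)
        (hf.mono hsub)
      have hzval : min (f r) (f t) ≤ f z := by
        rcases eq_or_lt_of_le hz.1 with hzr | hzr
        · rw [← hzr]; exact min_le_left _ _
        rcases eq_or_lt_of_le hz.2 with hzt | hzt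
        · rw [hzt]; exact min_le_right _ _
        exact absurd hzmin (key z ⟨hzr, hzt⟩)
      have hnx := key x hx
      rw [isMinOn_iff] at hnx
      push_neg at hnx
      obtain ⟨y, hy, hyx⟩ := hnx
      calc min (f r) (f t) ≤ f z := hzval
        _ ≤ f y := hzmin hy
        _ < f x := hyx
    obtain ⟨m, hm, hmax⟩ := isCompact_Icc.exists_isMaxOn (nonempty_Icc.mpr hpq.le) hf
    rcases lt_or_ge p m with hpm | hmp
    · have hmono : MonotoneOn f (Icc p m) := by
        intro a ha b hb hab
        rcases eq_or_lt_of_le hab with rfl | hab'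
        · exact le_rfl
        rcases eq_or_lt_of_le hb.2 with rfl | hbm
        · exact hmax ⟨ha.1, ha.2.trans hm.2⟩
        have h1 := quasi a m ha.1 (hab'.trans_le hb.2) hm.2 b ⟨hab', hbm⟩
        have h2 : f b ≤ f m := hmax ⟨hb.1, hb.2.trans hm.2⟩
        rcases min_cases (f a) (f m) with ⟨he, _⟩ | ⟨he, _⟩ <;> rw [he] at h1 <;> linarith
      obtain ⟨x, hx, C, hC, hbd⟩ := mono_pt hpm hmono
      refine ⟨x, ⟨hx.1, hx.2.trans_le hm.2⟩, C, hC, ?_⟩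
      filter_upwards [hbd] with y hy
      exact max_le (le_trans (le_abs_self _) hy) (by positivity)
    · have hmpe : m = p := le_antisymm hmp hm.1
      subst hmpe
      have hanti : MonotoneOn (fun s => -(f s)) (Icc m q) := by
        intro a ha b hb hab
        simp only [neg_le_neg_iff]
        rcases eq_or_lt_of_le hab with rfl | hab'
        · exact le_rfl
        rcases eq_or_lt_of_le ha.1 with rfl | hma
        · exact hmax hb
        have h1 := quasi m b le_rfl (hma.trans hab') hb.2 a ⟨hma, hab'⟩
        have h2 : f a ≤ f m := hmax ha
        rcases min_cases (f m) (f b) with ⟨he, _⟩ | ⟨he, _⟩ <;> rw [he] at h1 <;> linarith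
      obtain ⟨x, hx, C, hC, hbd⟩ := mono_pt hpq hanti
      refine ⟨x, hx, C, hC, ?_⟩
      filter_upwards [hbd] with y hy
      have hb2 : |f x - f y| ≤ C * |x - y| := by
        calc |f x - f y| = |-(f x) - -(f y)| := by rw [← abs_neg]; ring_nf
          _ ≤ C * |x - y| := hy
      exact max_le (le_trans (le_abs_self _) hb2) (by positivity)


/-- On the snowflaked interval, no slope eikonal equation with positive
continuous right-hand side and zero boundary data admits a continuous pointwise solution. -/
theorem stmt5 (Ω : Set Snow) (hΩ : IsOpen Ω) (hne : Ω.Nonempty) (hproper : Ω ≠ Set.univ)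
    (ℓ : Snow → ℝ) (hℓ : ContinuousOn ℓ Ω) (hpos : ∀ x ∈ Ω, 0 < ℓ x) :
    ¬ ∃ u : Snow → ℝ, ContinuousOn u (closure Ω) ∧
        (∀ x ∈ Ω, locSlopeOn u (closure Ω) x = ENNReal.ofReal (ℓ x)) ∧
        ∀ x ∈ frontier Ω, u x = 0 := by
  rintro ⟨u, hu, hslope, -⟩
  obtain ⟨x₀, hx₀⟩ := hne
  obtain ⟨ε, hε, hball⟩ := Metric.isOpen_iff.mp hΩ x₀ hx₀
  set δ : ℝ := ε ^ 2 / 2 with hδdef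
  have hδ : 0 < δ := by positivity
  set p : ℝ := max 0 (x₀.val - δ) with hpdef
  set q : ℝ := min 1 (x₀.val + δ) with hqdef
  have hp0 : 0 ≤ p := le_max_left _ _
  have hq1 : q ≤ 1 := min_le_left _ _
  have hpq : p < q := by
    rcases lt_or_ge x₀.val 1 with h | h
    · have h1 : x₀.val < q := lt_min h (by linarith)
      exact lt_of_le_of_lt (max_le x₀.mem.1 (by linarith)) h1
    · have h1 : x₀.val = 1 := le_antisymm x₀.mem.2 h
      have h2 : q = 1 := min_eq_left (by rw [h1]; linarith)
      have h3 : p < 1 := max_lt zero_lt_one (by rw [h1]; linarith)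
      rw [h2]; exact h3
  have hJ : ∀ z : Snow, z.val ∈ Icc p q → z ∈ Ω := by
    intro z hz
    apply hball
    rw [Metric.mem_ball, snow_dist]
    have h1 : |z.val - x₀.val| ≤ δ := by
      rw [abs_le]
      constructor
      · have h2 := hz.1
        have h3 : x₀.val - δ ≤ p := le_max_right _ _
        linarith
      · have h2 := hz.2
        have h3 : q ≤ x₀.val + δ := min_le_right _ _
        linarith
    refine (Real.sqrt_lt' hε).mpr (lt_of_le_of_lt h1 ?_)
    rw [hδdef]; nlinarith
  have hIccsub : Icc p q ⊆ Icc (0:ℝ) 1 := fun z hz => ⟨le_trans hp0 hz.1, hz.2.trans hq1⟩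
  set f : ℝ → ℝ := fun t => u (eSnow t) with hfdef
  have hmapsto : MapsTo eSnow (Icc p q) (closure Ω) := by
    intro t ht
    apply subset_closure
    apply hJ
    rw [eSnow_val_of_mem (hIccsub ht)]
    exact ht
  have hfc : ContinuousOn f (Icc p q) := hu.comp eSnow_continuous.continuousOn hmapsto
  obtain ⟨x, hxIoo, C, hC, hev⟩ := core_dichotomy hpq hfc
  have hxmem : x ∈ Icc (0:ℝ) 1 := hIccsub (Ioo_subset_Icc_self hxIoo)
  set x' : Snow := eSnow x with hx'def
  have hx'val : x'.val = x := eSnow_val_of_mem hxmem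
  have hx'Ω : x' ∈ Ω := hJ x' (by rw [hx'val]; exact Ioo_subset_Icc_self hxIoo)
  have heq := hslope x' hx'Ω
  have hℓpos := hpos x' hx'Ω
  rw [Metric.eventually_nhds_iff] at hev
  obtain ⟨δ₂, hδ₂, hev⟩ := hev
  set ε₀ : ℝ := min (Real.sqrt δ₂) (ℓ x' / (2 * (C + 1))) with hε₀def
  have hε₀ : 0 < ε₀ := lt_min (Real.sqrt_pos.mpr hδ₂) (by positivity)
  have hub : ∀ᶠ y in 𝓝[closure Ω \ {x'}] x',
      ENNReal.ofReal (max (u x' - u y) 0 / dist x' y) ≤ ENNReal.ofReal (C * ε₀) := by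
    have hmem : ∀ᶠ y in 𝓝[closure Ω \ {x'}] x', y ∈ closure Ω \ {x'} :=
      eventually_mem_nhdsWithin
    have hballev : ∀ᶠ y in 𝓝[closure Ω \ {x'}] x', dist y x' < ε₀ :=
      eventually_nhdsWithin_of_eventually_nhds
        (Metric.eventually_nhds_iff.mpr ⟨ε₀, hε₀, fun y hy => hy⟩)
    filter_upwards [hmem, hballev] with y hy hyd
    have hyne : y ≠ x' := hy.2
    have hdistpos : 0 < dist x' y := dist_pos.mpr (fun h => hyne h.symm)
    have hd2 : (dist x' y) ^ 2 = |x - y.val| := by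
      rw [snow_dist, hx'val, Real.sq_sqrt (abs_nonneg _)]
    have hdlt : dist x' y < ε₀ := by rw [dist_comm]; exact hyd
    have hxy : |x - y.val| < δ₂ := by
      rw [← hd2]
      have h3 : dist x' y < Real.sqrt δ₂ := lt_of_lt_of_le hdlt (min_le_left _ _)
      nlinarith [dist_nonneg (x := x') (y := y), Real.sq_sqrt hδ₂.le, Real.sqrt_nonneg δ₂]
    have hfy : f (y.val) = u y := by
      simp only [hfdef]
      congr 1
      exact snow_ext (eSnow_val_of_mem y.mem)
    have hfx : f x = u x' := rfl
    have hnum : max (u x' - u y) 0 ≤ C * |x - y.val| := by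
      have h4 := hev (y := y.val) (by rw [Real.dist_eq, abs_sub_comm]; exact hxy)
      rwa [hfx, hfy] at h4
    have hratio : max (u x' - u y) 0 / dist x' y ≤ C * ε₀ := by
      rw [div_le_iff₀ hdistpos]
      calc max (u x' - u y) 0 ≤ C * |x - y.val| := hnum
        _ = C * (dist x' y) ^ 2 := by rw [hd2]
        _ = (C * dist x' y) * dist x' y := by ring
        _ ≤ (C * ε₀) * dist x' y := by
            refine mul_le_mul_of_nonneg_right ?_ dist_nonneg
            exact mul_le_mul_of_nonneg_left hdlt.le hC
    exact ENNReal.ofReal_le_ofReal hratio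
  have hlimsup : locSlopeOn u (closure Ω) x' ≤ ENNReal.ofReal (C * ε₀) := by
    unfold locSlopeOn
    exact Filter.limsup_le_of_le (h := hub)
  rw [heq] at hlimsup
  have hlt : C * ε₀ < ℓ x' := by
    have h5 : ε₀ ≤ ℓ x' / (2 * (C + 1)) := min_le_right _ _
    have h6 : ε₀ * (2 * (C + 1)) ≤ ℓ x' := (le_div_iff₀ (by positivity)).mp h5
    nlinarith [mul_nonneg hC hε₀.le]
  exact lt_irrefl _ (lt_of_le_of_lt hlimsup ((ENNReal.ofReal_lt_ofReal_iff hℓpos).mpr hlt))
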